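/- Let P be a polytope in ℝⁿ that is a zero-summand, and let d ∈ ℝⁿ be a non-zero vector such that the face S_{−d}(P) has affine span of dimension at most n − 2. Then the face S_d(P) is a zero-summand relative to the hyperplane direction d: there exist finitely many polytopes R_1, …, R_r and T_1, …, T_s in ℝⁿ, each contained in a translate of the orthogonal complement of d and each having affine span of dimension at most n − 2, such that S_d(P) + R_1 + ⋯ + R_r = T_1 + ⋯ + T_s (Minkowski sums). -/

import Mathlib

open RealInnerProductSpace Pointwise

/-- A polytope in `ℝⁿ`: the convex hull of a non-empty finite set of points. -/
def IsPolytope {n : ℕ} (P : Set (EuclideanSpace ℝ (Fin n))) : Prop :=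
  ∃ s : Finset (EuclideanSpace ℝ (Fin n)),
    s.Nonempty ∧ P = convexHull ℝ (s : Set (EuclideanSpace ℝ (Fin n)))

/-- A zero volume polytope: a polytope with empty interior. -/
def IsZeroVolPolytope {n : ℕ} (P : Set (EuclideanSpace ℝ (Fin n))) : Prop :=
  IsPolytope P ∧ interior P = ∅

/-- A zero-summand: a polytope `P` such that `P + P₁ + ⋯ + P_r = Q₁ + ⋯ + Q_s`
for some zero volume polytopes `Pᵢ`, `Qⱼ` (Minkowski sums). -/
def IsZeroSummand {n : ℕ} (P : Set (EuclideanSpace ℝ (Fin n))) : Prop :=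
  ∃ (r s : ℕ) (Ps : Fin r → Set (EuclideanSpace ℝ (Fin n)))
    (Qs : Fin s → Set (EuclideanSpace ℝ (Fin n))),
    (∀ i, IsZeroVolPolytope (Ps i)) ∧ (∀ j, IsZeroVolPolytope (Qs j)) ∧
    P + ∑ i, Ps i = ∑ j, Qs j

/-- The face of `P` in direction `d`:
`S_d(P) = {x ∈ P | ⟪x, d⟫ = max_{y ∈ P} ⟪y, d⟫}`. -/
def faceIn {n : ℕ} (d : EuclideanSpace ℝ (Fin n))
    (P : Set (EuclideanSpace ℝ (Fin n))) : Set (EuclideanSpace ℝ (Fin n)) :=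
  {x ∈ P | ⟪x, d⟫ = sSup ((fun y => ⟪y, d⟫) '' P)}

/-- The dimension of the affine span of a set in `ℝⁿ`. -/
noncomputable def affDim {n : ℕ} (S : Set (EuclideanSpace ℝ (Fin n))) : ℕ :=
  Module.finrank ℝ (affineSpan ℝ S).direction

namespace S9

variable {n : ℕ}

local notation "E" => EuclideanSpace ℝ (Fin n)

noncomputable def hsup (d : E) (A : Set E) : ℝ := sSup ((fun y => ⟪y, d⟫) '' A)

lemma mem_faceIn {d : E} {A : Set E} {x : E} :
    x ∈ faceIn d A ↔ x ∈ A ∧ ⟪x, d⟫ = hsup d A := Iff.rfl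

lemma cont_inner (d : E) : Continuous fun y : E => ⟪y, d⟫ :=
  Continuous.inner continuous_id continuous_const

lemma isGreatest_hsup {d : E} {A : Set E} (hA : IsCompact A) (hne : A.Nonempty) :
    IsGreatest ((fun y : E => ⟪y, d⟫) '' A) (hsup d A) := by
  obtain ⟨x, hx, hmax⟩ := hA.exists_isMaxOn hne (cont_inner d).continuousOn
  have hg : IsGreatest ((fun y : E => ⟪y, d⟫) '' A) ⟪x, d⟫ :=
    ⟨⟨x, hx, rfl⟩, by rintro _ ⟨y, hy, rfl⟩; exact hmax hy⟩
  rwa [hsup, hg.csSup_eq]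

lemma le_hsup {d : E} {A : Set E} (hA : IsCompact A) (hne : A.Nonempty) {x : E}
    (hx : x ∈ A) : ⟪x, d⟫ ≤ hsup d A :=
  (isGreatest_hsup hA hne).2 ⟨x, hx, rfl⟩

lemma faceIn_nonempty {d : E} {A : Set E} (hA : IsCompact A) (hne : A.Nonempty) :
    (faceIn d A).Nonempty := by
  obtain ⟨x, hx, hval⟩ := (isGreatest_hsup (d := d) hA hne).1
  exact ⟨x, hx, hval⟩

lemma faceIn_subset {d : E} {A : Set E} : faceIn d A ⊆ A := fun _ h => h.1

lemma hsup_add {d : E} {A B : Set E} (hA : IsCompact A) (hneA : A.Nonempty)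
    (hB : IsCompact B) (hneB : B.Nonempty) :
    hsup d (A + B) = hsup d A + hsup d B := by
  obtain ⟨a, ha, hva⟩ := faceIn_nonempty (d := d) hA hneA
  obtain ⟨b, hb, hvb⟩ := faceIn_nonempty (d := d) hB hneB
  have hg : IsGreatest ((fun y : E => ⟪y, d⟫) '' (A + B)) (hsup d A + hsup d B) := by
    constructor
    · refine ⟨a + b, Set.add_mem_add ha hb, ?_⟩
      show ⟪a + b, d⟫ = _
      rw [inner_add_left, hva, hvb]; rfl
    · rintro _ ⟨z, hz, rfl⟩
      obtain ⟨x, hx, y, hy, rfl⟩ := hz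
      show ⟪x + y, d⟫ ≤ _
      rw [inner_add_left]
      exact add_le_add (le_hsup hA hneA hx) (le_hsup hB hneB hy)
  rw [hsup, hg.csSup_eq]

lemma faceIn_add {d : E} {A B : Set E} (hA : IsCompact A) (hneA : A.Nonempty)
    (hB : IsCompact B) (hneB : B.Nonempty) :
    faceIn d (A + B) = faceIn d A + faceIn d B := by
  ext z
  rw [mem_faceIn, hsup_add hA hneA hB hneB]
  constructor
  · rintro ⟨⟨x, hx, y, hy, rfl⟩, hval⟩
    rw [inner_add_left] at hval
    have h1 : ⟪x, d⟫ = hsup d A := by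
      by_contra h
      have h1 := lt_of_le_of_ne (le_hsup hA hneA hx) h
      have h2 := le_hsup (d := d) hB hneB hy
      linarith
    have h2 : ⟪y, d⟫ = hsup d B := by linarith [h1, hval]
    exact Set.add_mem_add ⟨hx, h1⟩ ⟨hy, h2⟩
  · rintro ⟨x, ⟨hx, hvx⟩, y, ⟨hy, hvy⟩, rfl⟩
    exact ⟨Set.add_mem_add hx hy, by rw [inner_add_left, hvx, hvy]; rfl⟩

lemma faceIn_zero {d : E} : faceIn d (0 : Set E) = 0 := by
  have h0 : (0 : Set E) = {0} := rfl
  ext z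
  rw [mem_faceIn]
  have : hsup d (0 : Set E) = 0 := by
    have hg : IsGreatest ((fun y : E => ⟪y, d⟫) '' (0 : Set E)) 0 := by
      constructor
      · exact ⟨0, rfl, inner_zero_left d⟩
      · rintro _ ⟨y, hy, rfl⟩
        rw [h0] at hy
        simp at hy
        simp [hy]
    rw [hsup, hg.csSup_eq]
  rw [this, h0]
  simp only [Set.mem_singleton_iff]
  constructor
  · rintro ⟨h, _⟩; exact h
  · rintro rfl; exact ⟨rfl, inner_zero_left d⟩

end S9

namespace S9b
open S9

variable {n : ℕ}

local notation "E" => EuclideanSpace ℝ (Fin n)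

def Good (A : Set E) : Prop := IsCompact A ∧ A.Nonempty ∧ Convex ℝ A

lemma good_zero : Good (0 : Set E) :=
  ⟨isCompact_singleton, ⟨0, rfl⟩, convex_singleton 0⟩

lemma Good.add {A B : Set E} (hA : Good A) (hB : Good B) : Good (A + B) :=
  ⟨hA.1.add hB.1, hA.2.1.add hB.2.1, hA.2.2.add hB.2.2⟩

lemma good_sum {ι : Type*} (t : Finset ι) (A : ι → Set E)
    (h : ∀ i ∈ t, Good (A i)) : Good (∑ i ∈ t, A i) := by
  induction t using Finset.cons_induction with
  | empty => simpa using good_zero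
  | cons a t ha ih =>
    rw [Finset.sum_cons]
    exact (h a (Finset.mem_cons_self a t)).add
      (ih fun i hi => h i (Finset.mem_cons_of_mem hi))

lemma good_polytope {A : Set E} (h : IsPolytope A) : Good A := by
  obtain ⟨s, hs, rfl⟩ := h
  obtain ⟨x, hx⟩ := hs
  exact ⟨s.finite_toSet.isCompact_convexHull ℝ,
    ⟨x, subset_convexHull ℝ _ (by exact_mod_cast hx)⟩, convex_convexHull ℝ _⟩

lemma good_faceIn {d : E} {A : Set E} (h : Good A) : Good (faceIn d A) := by
  refine ⟨?_, faceIn_nonempty h.1 h.2.1, ?_⟩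
  · have hclosed : IsClosed (faceIn d A) := by
      have : faceIn d A = A ∩ (fun y : E => ⟪y, d⟫) ⁻¹' {hsup d A} := by
        ext x; exact Iff.rfl
      rw [this]
      exact h.1.isClosed.inter (isClosed_singleton.preimage (cont_inner d))
    exact h.1.of_isClosed_subset hclosed faceIn_subset
  · have : faceIn d A = A ∩ {x : E | ⟪x, d⟫ = hsup d A} := rfl
    rw [this]
    exact h.2.2.inter (convex_hyperplane
      ⟨fun a b => inner_add_left a b d, fun c a => real_inner_smul_left a d c⟩ _)

lemma faceIn_sum {ι : Type*} (d : E) (t : Finset ι) (A : ι → Set E)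
    (h : ∀ i ∈ t, Good (A i)) :
    faceIn d (∑ i ∈ t, A i) = ∑ i ∈ t, faceIn d (A i) := by
  induction t using Finset.cons_induction with
  | empty => simpa using faceIn_zero
  | cons a t ha ih =>
    have hg := good_sum t A fun i hi => h i (Finset.mem_cons_of_mem hi)
    have hga := h a (Finset.mem_cons_self a t)
    rw [Finset.sum_cons, faceIn_add hga.1 hga.2.1 hg.1 hg.2.1,
      ih fun i hi => h i (Finset.mem_cons_of_mem hi), Finset.sum_cons]

lemma isPolytope_faceIn {d : E} {A : Set E} (h : IsPolytope A) :
    IsPolytope (faceIn d A) := by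
  classical
  obtain ⟨s, hs, rfl⟩ := h
  set A := convexHull ℝ (s : Set E) with hA
  have hgood : Good A := good_polytope ⟨s, hs, hA⟩
  set M := hsup d A with hM
  obtain ⟨v₀, hv₀s, hv₀max⟩ := s.exists_max_image (fun y => ⟪y, d⟫) hs
  have hlin : IsLinearMap ℝ (fun y : E => ⟪y, d⟫) :=
    ⟨fun a b => inner_add_left a b d, fun c a => real_inner_smul_left a d c⟩
  have hub : ∀ x ∈ A, ⟪x, d⟫ ≤ ⟪v₀, d⟫ := by
    intro x hx
    have : A ⊆ {y : E | ⟪y, d⟫ ≤ ⟪v₀, d⟫} :=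
      convexHull_min (fun y hy => hv₀max y hy) (convex_halfSpace_le hlin _)
    exact this hx
  have hMv₀ : ⟪v₀, d⟫ = M := by
    have hg : IsGreatest ((fun y : E => ⟪y, d⟫) '' A) ⟪v₀, d⟫ :=
      ⟨⟨v₀, subset_convexHull ℝ _ hv₀s, rfl⟩, by rintro _ ⟨y, hy, rfl⟩; exact hub y hy⟩
    rw [hM, hsup, hg.csSup_eq]
  set s' := s.filter (fun v => ⟪v, d⟫ = M) with hs'
  refine ⟨s', ⟨v₀, Finset.mem_filter.mpr ⟨hv₀s, hMv₀⟩⟩, ?_⟩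
  apply Set.Subset.antisymm
  · rintro x ⟨hxA, hxv⟩
    rw [hA, Finset.convexHull_eq] at hxA
    obtain ⟨w, hw0, hw1, hwx⟩ := hxA
    rw [Finset.centerMass_eq_of_sum_1 _ _ hw1] at hwx
    simp only [id] at hwx
    have hxval : ⟪x, d⟫ = ∑ y ∈ s, w y * ⟪y, d⟫ := by
      rw [← hwx, sum_inner]
      exact Finset.sum_congr rfl fun y _ => real_inner_smul_left y d (w y)
    have hxM : ⟪x, d⟫ = M := hxv
    have hzero : ∑ y ∈ s, w y * (M - ⟪y, d⟫) = 0 := by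
      have hrw : ∑ y ∈ s, w y * (M - ⟪y, d⟫)
          = (∑ y ∈ s, w y) * M - ∑ y ∈ s, w y * ⟪y, d⟫ := by
        rw [Finset.sum_mul, ← Finset.sum_sub_distrib]
        exact Finset.sum_congr rfl fun y _ => by ring
      rw [hrw, hw1, ← hxval, one_mul, hxM, sub_self]
    have hkey : ∀ y ∈ s, w y ≠ 0 → ⟪y, d⟫ = M := by
      intro y hy hwy
      have hterms : ∀ z ∈ s, 0 ≤ w z * (M - ⟪z, d⟫) := fun z hz =>
        mul_nonneg (hw0 z hz) (sub_nonneg.mpr (hMv₀ ▸ hub z (subset_convexHull ℝ _ hz)))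
      have h0 := (Finset.sum_eq_zero_iff_of_nonneg hterms).mp hzero y hy
      rcases mul_eq_zero.mp h0 with h | h
      · exact absurd h hwy
      · exact (sub_eq_zero.mp h).symm
    have hsum' : ∑ y ∈ s', w y = 1 := by
      rw [← hw1]
      apply Finset.sum_subset (Finset.filter_subset _ _)
      intro y hy hyn
      by_contra hne
      exact hyn (Finset.mem_filter.mpr ⟨hy, hkey y hy hne⟩)
    have hx' : ∑ y ∈ s', w y • y = x := by
      rw [← hwx]
      apply Finset.sum_subset (Finset.filter_subset _ _)
      intro y hy hyn
      have : w y = 0 := by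
        by_contra hne
        exact hyn (Finset.mem_filter.mpr ⟨hy, hkey y hy hne⟩)
      rw [this, zero_smul]
    have := s'.centerMass_mem_convexHull (w := w)
      (fun i hi => hw0 i (Finset.filter_subset _ _ hi)) (by rw [hsum']; norm_num)
      (fun i hi => Finset.mem_coe.mpr hi : ∀ i ∈ s', id i ∈ (s' : Set E))
    rw [Finset.centerMass_eq_of_sum_1 _ _ hsum'] at this
    simp only [id, Set.image_id] at this
    rw [hx'] at this
    simpa using this
  · apply convexHull_min
    · intro v hv
      rw [hs', Finset.mem_coe, Finset.mem_filter] at hv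
      exact ⟨subset_convexHull ℝ _ hv.1, hv.2⟩
    · have : faceIn d A = A ∩ {x : E | ⟪x, d⟫ = M} := rfl
      rw [this]
      exact hgood.2.2.inter (convex_hyperplane hlin _)

end S9b

namespace S9c
open S9 S9b

variable {n : ℕ}

local notation "E" => EuclideanSpace ℝ (Fin n)

/-- A set on which `⟪·, d⟫` is constant. -/
def Parallel (d : E) (A : Set E) : Prop := ∀ x ∈ A, ∀ y ∈ A, ⟪x, d⟫ = ⟪y, d⟫

lemma parallel_neg {d : E} {A : Set E} (h : Parallel d A) : Parallel (-d) A := by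
  intro x hx y hy
  rw [inner_neg_right, inner_neg_right, h x hx y hy]

lemma faceIn_of_parallel {d : E} {A : Set E} (hA : IsCompact A) (hne : A.Nonempty)
    (h : Parallel d A) : faceIn d A = A := by
  apply Set.Subset.antisymm faceIn_subset
  obtain ⟨x₀, hx₀, hv₀⟩ := faceIn_nonempty (d := d) hA hne
  intro x hx
  exact ⟨hx, by rw [h x hx x₀ hx₀]; exact hv₀⟩

lemma level_subset_translate {d : E} (hd : d ≠ 0) {A : Set E} {c : ℝ}
    (h : ∀ x ∈ A, ⟪x, d⟫ = c) :
    A ⊆ ((c / (‖d‖ ^ 2)) • d) +ᵥ ((ℝ ∙ d)ᗮ : Set E) := by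
  intro x hx
  rw [Set.mem_vadd_set_iff_neg_vadd_mem]
  show -((c / (‖d‖ ^ 2)) • d) + x ∈ ((ℝ ∙ d)ᗮ : Set E)
  have : -((c / (‖d‖ ^ 2)) • d) + x ∈ (ℝ ∙ d)ᗮ := by
    rw [Submodule.mem_orthogonal_singleton_iff_inner_left]
    rw [inner_add_left, inner_neg_left, real_inner_smul_left,
      real_inner_self_eq_norm_sq, h x hx]
    have hd2 : ‖d‖ ^ 2 ≠ 0 := pow_ne_zero 2 (norm_ne_zero_iff.mpr hd)
    field_simp
    ring
  exact this

lemma faceIn_subset_translate {d : E} (hd : d ≠ 0) (A : Set E) :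
    faceIn d A ⊆ ((hsup d A / (‖d‖ ^ 2)) • d) +ᵥ ((ℝ ∙ d)ᗮ : Set E) :=
  level_subset_translate hd fun _ hx => hx.2

lemma span_neg_singleton (d : E) : (ℝ ∙ (-d)) = (ℝ ∙ d) := by
  rw [show ({-d} : Set E) = -{d} by simp, Submodule.span_neg]

lemma affDim_le_of_subset_translate {A : Set E} {W : Submodule ℝ E} {v : E}
    (h : A ⊆ v +ᵥ (W : Set E)) : affDim A ≤ Module.finrank ℝ W := by
  have h1 : affineSpan ℝ A ≤ AffineSubspace.mk' v W := by
    apply affineSpan_le.mpr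
    intro x hx
    obtain ⟨w, hw, rfl⟩ := h hx
    exact AffineSubspace.mem_mk'.mpr (by simpa using hw)
  exact Submodule.finrank_mono
    ((AffineSubspace.direction_le h1).trans_eq (AffineSubspace.direction_mk' v W))

lemma direction_le_of_subset_translate {A : Set E} {W : Submodule ℝ E} {v : E}
    (h : A ⊆ v +ᵥ (W : Set E)) : (affineSpan ℝ A).direction ≤ W := by
  have h1 : affineSpan ℝ A ≤ AffineSubspace.mk' v W := by
    apply affineSpan_le.mpr
    intro x hx
    obtain ⟨w, hw, rfl⟩ := h hx
    exact AffineSubspace.mem_mk'.mpr (by simpa using hw)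
  exact (AffineSubspace.direction_le h1).trans_eq (AffineSubspace.direction_mk' v W)

lemma finrank_orth {d : E} (hd : d ≠ 0) :
    Module.finrank ℝ ((ℝ ∙ d)ᗮ : Submodule ℝ E) + 1 = n := by
  have h1 := Submodule.finrank_add_finrank_orthogonal (K := (ℝ ∙ d : Submodule ℝ E))
  rw [finrank_span_singleton hd] at h1
  rw [finrank_euclideanSpace_fin] at h1
  omega

lemma affDim_lt_of_zeroVol {A : Set E} (hA : IsZeroVolPolytope A) : affDim A < n := by
  obtain ⟨hp, hint⟩ := hA
  have hg := good_polytope hp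
  by_contra hle
  push_neg at hle
  have hfr : Module.finrank ℝ (affineSpan ℝ A).direction = n := by
    have h1 := Submodule.finrank_le (affineSpan ℝ A).direction
    rw [finrank_euclideanSpace_fin] at h1
    have h2 : affDim A = Module.finrank ℝ (affineSpan ℝ A).direction := rfl
    omega
  have hdir : (affineSpan ℝ A).direction = ⊤ :=
    Submodule.eq_top_of_finrank_eq (by rw [hfr, finrank_euclideanSpace_fin])
  have hspan : affineSpan ℝ A = ⊤ := by
    rw [← AffineSubspace.direction_eq_top_iff_of_nonempty
      ((affineSpan_nonempty (k := ℝ)).mpr hg.2.1)]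
    exact hdir
  have := hg.2.2.interior_nonempty_iff_affineSpan_eq_top.mpr hspan
  rw [hint] at this
  exact absurd this Set.not_nonempty_empty

lemma affDim_faceIn_le {d : E} (hd : d ≠ 0) {A : Set E} (hA : IsZeroVolPolytope A)
    (hnp : ¬ Parallel d A) : (affDim (faceIn d A) : ℤ) ≤ (n : ℤ) - 2 := by
  have hg := good_polytope hA.1
  set F := faceIn d A with hF
  have htr := faceIn_subset_translate hd A
  have hdirF : (affineSpan ℝ F).direction ≤ (ℝ ∙ d)ᗮ :=
    direction_le_of_subset_translate htr
  have hle : affDim F ≤ Module.finrank ℝ ((ℝ ∙ d)ᗮ : Submodule ℝ E) :=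
    affDim_le_of_subset_translate htr
  have hne : affDim F ≠ Module.finrank ℝ ((ℝ ∙ d)ᗮ : Submodule ℝ E) := by
    intro heq
    -- then direction F = dᗮ, and direction A = dᗮ, contradicting non-parallel
    have hFA : (affineSpan ℝ F).direction ≤ (affineSpan ℝ A).direction :=
      AffineSubspace.direction_le (affineSpan_mono ℝ faceIn_subset)
    have hAn : Module.finrank ℝ (affineSpan ℝ A).direction ≤ affDim F := by
      have h1 : affDim A < n := affDim_lt_of_zeroVol hA
      have h2 := finrank_orth hd
      rw [heq]
      unfold affDim at h1
      omega
    have hFdir : (affineSpan ℝ F).direction = (affineSpan ℝ A).direction :=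
      Submodule.eq_of_le_of_finrank_le hFA hAn
    have hAdir : (affineSpan ℝ A).direction = (ℝ ∙ d)ᗮ := by
      apply Submodule.eq_of_le_of_finrank_le (hFdir ▸ hdirF)
      rw [← heq, ← hFdir]
      exact le_of_eq rfl
    apply hnp
    intro x hx y hy
    have hxy : x - y ∈ (affineSpan ℝ A).direction := by
      have := AffineSubspace.vsub_mem_direction
        (mem_affineSpan ℝ hx) (mem_affineSpan ℝ hy)
      simpa using this
    rw [hAdir, Submodule.mem_orthogonal_singleton_iff_inner_left, inner_sub_left,
      sub_eq_zero] at hxy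
    exact hxy
  have h2 := finrank_orth hd
  omega

end S9c

namespace S9d
open S9 S9b S9c

variable {n : ℕ}

local notation "E" => EuclideanSpace ℝ (Fin n)

lemma subset_of_hsup_le {A B : Set E} (hB : IsCompact B) (hBc : Convex ℝ B)
    (hBne : B.Nonempty) (hA : IsCompact A) (hAne : A.Nonempty)
    (h : ∀ u : E, hsup u A ≤ hsup u B) : A ⊆ B := by
  intro x hx
  by_contra hxB
  obtain ⟨f, c, hfB, hfx⟩ := geometric_hahn_banach_closed_point hBc hB.isClosed hxB
  set u := (InnerProductSpace.toDual ℝ (EuclideanSpace ℝ (Fin n))).symm f with hu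
  have hfu : ∀ y : E, ⟪y, u⟫ = f y := fun y => by
    rw [real_inner_comm]; exact InnerProductSpace.toDual_symm_apply
  have h1 : hsup u B ≤ c := by
    apply csSup_le (hBne.image _)
    rintro _ ⟨y, hy, rfl⟩
    show ⟪y, u⟫ ≤ c
    rw [hfu]
    exact (hfB y hy).le
  have h2 : ⟪x, u⟫ ≤ hsup u A := le_hsup hA hAne hx
  rw [hfu] at h2
  have h3 := h u
  linarith

lemma add_cancel {A B C : Set E} (hA : Good A) (hB : Good B) (hC : IsCompact C)
    (hCne : C.Nonempty) (h : A + C = B + C) : A = B := by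
  have hs : ∀ u : E, hsup u A = hsup u B := by
    intro u
    have h1 := congrArg (hsup u) h
    rw [hsup_add hA.1 hA.2.1 hC hCne, hsup_add hB.1 hB.2.1 hC hCne] at h1
    linarith
  exact Set.Subset.antisymm
    (subset_of_hsup_le hB.1 hB.2.2 hB.2.1 hA.1 hA.2.1 fun u => (hs u).le)
    (subset_of_hsup_le hA.1 hA.2.2 hA.2.1 hB.1 hB.2.1 fun u => (hs u).ge)

end S9d

namespace S9e
open S9 S9b S9c S9d

variable {n : ℕ}

local notation "E" => EuclideanSpace ℝ (Fin n)

/-- The property required of each summand in the conclusion. -/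
def Pr (d : E) (A : Set E) : Prop :=
  IsPolytope A ∧
    (∃ v : E, A ⊆ v +ᵥ ((ℝ ∙ d)ᗮ : Set E)) ∧
    (affDim A : ℤ) ≤ (n : ℤ) - 2

lemma pr_zero {d : E} (hn2 : 2 ≤ n) : Pr d (0 : Set E) := by
  refine ⟨⟨{0}, ⟨0, Finset.mem_singleton_self 0⟩, by
    rw [Finset.coe_singleton, convexHull_singleton]; rfl⟩, ⟨0, ?_⟩, ?_⟩
  · rw [zero_vadd]
    rintro x rfl
    exact Submodule.zero_mem _
  · have h1 : affDim (0 : Set E) ≤ Module.finrank ℝ (⊥ : Submodule ℝ E) := by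
      apply affDim_le_of_subset_translate (v := 0)
      rw [zero_vadd]
      rintro x rfl
      exact Submodule.zero_mem _
    rw [finrank_bot] at h1
    omega

lemma pr_faceIn_d {d : E} (hd : d ≠ 0) {A : Set E} (hA : IsZeroVolPolytope A)
    (hnp : ¬ Parallel d A) : Pr d (faceIn d A) :=
  ⟨isPolytope_faceIn hA.1, ⟨_, faceIn_subset_translate hd A⟩, affDim_faceIn_le hd hA hnp⟩

lemma forall_addCases {m k : ℕ} {α : Type*} {p : α → Prop} (f : Fin m → α) (g : Fin k → α)
    (hf : ∀ i, p (f i)) (hg : ∀ j, p (g j)) : ∀ i, p (Fin.addCases f g i) := by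
  intro i
  induction i using Fin.addCases with
  | left i0 => rw [Fin.addCases_left]; exact hf i0
  | right j0 => rw [Fin.addCases_right]; exact hg j0

lemma pr_faceIn_neg {d : E} (hd : d ≠ 0) {A : Set E} (hA : IsZeroVolPolytope A)
    (hnp : ¬ Parallel d A) : Pr d (faceIn (-d) A) := by
  have hdne : -d ≠ 0 := neg_ne_zero.mpr hd
  have hnp' : ¬ Parallel (-d) A := fun hpar => hnp (by simpa using parallel_neg hpar)
  refine ⟨isPolytope_faceIn hA.1, ?_, affDim_faceIn_le hdne hA hnp'⟩
  have h := faceIn_subset_translate hdne A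
  rw [span_neg_singleton] at h
  exact ⟨_, h⟩

end S9e

theorem stmt9 (n : ℕ) (P : Set (EuclideanSpace ℝ (Fin n)))
    (hP : IsPolytope P) (hzs : IsZeroSummand P)
    (d : EuclideanSpace ℝ (Fin n)) (hd : d ≠ 0)
    (hface : (affDim (faceIn (-d) P) : ℤ) ≤ (n : ℤ) - 2) :
    ∃ (r s : ℕ) (Rs : Fin r → Set (EuclideanSpace ℝ (Fin n)))
      (Ts : Fin s → Set (EuclideanSpace ℝ (Fin n))),
      (∀ i, IsPolytope (Rs i) ∧
        (∃ v : EuclideanSpace ℝ (Fin n),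
          Rs i ⊆ v +ᵥ ((ℝ ∙ d)ᗮ : Set (EuclideanSpace ℝ (Fin n)))) ∧
        (affDim (Rs i) : ℤ) ≤ (n : ℤ) - 2) ∧
      (∀ j, IsPolytope (Ts j) ∧
        (∃ v : EuclideanSpace ℝ (Fin n),
          Ts j ⊆ v +ᵥ ((ℝ ∙ d)ᗮ : Set (EuclideanSpace ℝ (Fin n)))) ∧
        (affDim (Ts j) : ℤ) ≤ (n : ℤ) - 2) ∧
      faceIn d P + ∑ i, Rs i = ∑ j, Ts j := by
  classical
  open S9 S9b S9c S9d S9e in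
  obtain ⟨r, s, Ps, Qs, hPs, hQs, heq⟩ := hzs
  have hn2 : 2 ≤ n := by
    have h0 : (0 : ℤ) ≤ (affDim (faceIn (-d) P) : ℤ) := Int.natCast_nonneg _
    omega
  have hdne : -d ≠ 0 := neg_ne_zero.mpr hd
  have hgP : S9b.Good P := S9b.good_polytope hP
  have hgPs : ∀ i, S9b.Good (Ps i) := fun i => S9b.good_polytope (hPs i).1
  have hgQs : ∀ j, S9b.Good (Qs j) := fun j => S9b.good_polytope (hQs j).1
  -- split each summand according to whether it is parallel to the hyperplane
  set Pd : Fin r → Set (EuclideanSpace ℝ (Fin n)) :=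
    fun i => if S9c.Parallel d (Ps i) then 0 else faceIn d (Ps i) with hPdDef
  set Pm : Fin r → Set (EuclideanSpace ℝ (Fin n)) :=
    fun i => if S9c.Parallel d (Ps i) then 0 else faceIn (-d) (Ps i) with hPmDef
  set Pc : Fin r → Set (EuclideanSpace ℝ (Fin n)) :=
    fun i => if S9c.Parallel d (Ps i) then Ps i else 0 with hPcDef
  set Qd : Fin s → Set (EuclideanSpace ℝ (Fin n)) :=
    fun j => if S9c.Parallel d (Qs j) then 0 else faceIn d (Qs j) with hQdDef
  set Qm : Fin s → Set (EuclideanSpace ℝ (Fin n)) :=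
    fun j => if S9c.Parallel d (Qs j) then 0 else faceIn (-d) (Qs j) with hQmDef
  set Qc : Fin s → Set (EuclideanSpace ℝ (Fin n)) :=
    fun j => if S9c.Parallel d (Qs j) then Qs j else 0 with hQcDef
  have hsplit : ∀ (e : EuclideanSpace ℝ (Fin n)) (A : Set (EuclideanSpace ℝ (Fin n))),
      S9b.Good A → S9c.Parallel e A → faceIn e A = A := fun e A hg hp =>
    S9c.faceIn_of_parallel hg.1 hg.2.1 hp
  have hsplitPd : ∀ i, faceIn d (Ps i) = Pd i + Pc i := by
    intro i
    by_cases hpar : S9c.Parallel d (Ps i)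
    · simp only [hPdDef, hPcDef, if_pos hpar, hsplit d (Ps i) (hgPs i) hpar, zero_add]
    · simp only [hPdDef, hPcDef, if_neg hpar, add_zero]
  have hsplitPm : ∀ i, faceIn (-d) (Ps i) = Pm i + Pc i := by
    intro i
    by_cases hpar : S9c.Parallel d (Ps i)
    · simp only [hPmDef, hPcDef, if_pos hpar,
        hsplit (-d) (Ps i) (hgPs i) (S9c.parallel_neg hpar), zero_add]
    · simp only [hPmDef, hPcDef, if_neg hpar, add_zero]
  have hsplitQd : ∀ j, faceIn d (Qs j) = Qd j + Qc j := by
    intro j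
    by_cases hpar : S9c.Parallel d (Qs j)
    · simp only [hQdDef, hQcDef, if_pos hpar, hsplit d (Qs j) (hgQs j) hpar, zero_add]
    · simp only [hQdDef, hQcDef, if_neg hpar, add_zero]
  have hsplitQm : ∀ j, faceIn (-d) (Qs j) = Qm j + Qc j := by
    intro j
    by_cases hpar : S9c.Parallel d (Qs j)
    · simp only [hQmDef, hQcDef, if_pos hpar,
        hsplit (-d) (Qs j) (hgQs j) (S9c.parallel_neg hpar), zero_add]
    · simp only [hQmDef, hQcDef, if_neg hpar, add_zero]
  -- goodness of pieces
  have hgPd : ∀ i, S9b.Good (Pd i) := by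
    intro i; by_cases hpar : S9c.Parallel d (Ps i) <;>
      simp only [hPdDef, if_pos, if_neg, hpar, ite_true, ite_false]
    exacts [S9b.good_zero, S9b.good_faceIn (hgPs i)]
  have hgPm : ∀ i, S9b.Good (Pm i) := by
    intro i; by_cases hpar : S9c.Parallel d (Ps i) <;>
      simp only [hPmDef, hpar, ite_true, ite_false]
    exacts [S9b.good_zero, S9b.good_faceIn (hgPs i)]
  have hgPc : ∀ i, S9b.Good (Pc i) := by
    intro i; by_cases hpar : S9c.Parallel d (Ps i) <;>
      simp only [hPcDef, hpar, ite_true, ite_false]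
    exacts [hgPs i, S9b.good_zero]
  have hgQd : ∀ j, S9b.Good (Qd j) := by
    intro j; by_cases hpar : S9c.Parallel d (Qs j) <;>
      simp only [hQdDef, hpar, ite_true, ite_false]
    exacts [S9b.good_zero, S9b.good_faceIn (hgQs j)]
  have hgQm : ∀ j, S9b.Good (Qm j) := by
    intro j; by_cases hpar : S9c.Parallel d (Qs j) <;>
      simp only [hQmDef, hpar, ite_true, ite_false]
    exacts [S9b.good_zero, S9b.good_faceIn (hgQs j)]
  have hgQc : ∀ j, S9b.Good (Qc j) := by
    intro j; by_cases hpar : S9c.Parallel d (Qs j) <;>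
      simp only [hQcDef, hpar, ite_true, ite_false]
    exacts [hgQs j, S9b.good_zero]
  -- the two face equations
  have e1 : faceIn d P + ∑ i, faceIn d (Ps i) = ∑ j, faceIn d (Qs j) := by
    have hgs := S9b.good_sum Finset.univ Ps fun i _ => hgPs i
    rw [← S9b.faceIn_sum d Finset.univ Ps fun i _ => hgPs i,
      ← S9.faceIn_add hgP.1 hgP.2.1 hgs.1 hgs.2.1, heq,
      S9b.faceIn_sum d Finset.univ Qs fun j _ => hgQs j]
  have e2 : faceIn (-d) P + ∑ i, faceIn (-d) (Ps i) = ∑ j, faceIn (-d) (Qs j) := by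
    have hgs := S9b.good_sum Finset.univ Ps fun i _ => hgPs i
    rw [← S9b.faceIn_sum (-d) Finset.univ Ps fun i _ => hgPs i,
      ← S9.faceIn_add hgP.1 hgP.2.1 hgs.1 hgs.2.1, heq,
      S9b.faceIn_sum (-d) Finset.univ Qs fun j _ => hgQs j]
  rw [show (∑ i, faceIn d (Ps i)) = (∑ i, Pd i) + ∑ i, Pc i by
      rw [← Finset.sum_add_distrib]; exact Finset.sum_congr rfl fun i _ => hsplitPd i,
    show (∑ j, faceIn d (Qs j)) = (∑ j, Qd j) + ∑ j, Qc j by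
      rw [← Finset.sum_add_distrib]; exact Finset.sum_congr rfl fun j _ => hsplitQd j] at e1
  rw [show (∑ i, faceIn (-d) (Ps i)) = (∑ i, Pm i) + ∑ i, Pc i by
      rw [← Finset.sum_add_distrib]; exact Finset.sum_congr rfl fun i _ => hsplitPm i,
    show (∑ j, faceIn (-d) (Qs j)) = (∑ j, Qm j) + ∑ j, Qc j by
      rw [← Finset.sum_add_distrib]; exact Finset.sum_congr rfl fun j _ => hsplitQm j] at e2
  -- main equation via cancellation
  have hgXD := S9b.good_sum Finset.univ Pd fun i _ => hgPd i
  have hgXM := S9b.good_sum Finset.univ Pm fun i _ => hgPm i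
  have hgPC := S9b.good_sum Finset.univ Pc fun i _ => hgPc i
  have hgYD := S9b.good_sum Finset.univ Qd fun j _ => hgQd j
  have hgYM := S9b.good_sum Finset.univ Qm fun j _ => hgQm j
  have hgQC := S9b.good_sum Finset.univ Qc fun j _ => hgQc j
  have hgF := S9b.good_faceIn (d := d) hgP
  have hgG := S9b.good_faceIn (d := -d) hgP
  have key : (faceIn d P + ((∑ i, Pd i) + ∑ j, Qm j)) + ∑ j, Qc j
      = ((∑ j, Qd j) + (faceIn (-d) P + ∑ i, Pm i)) + ∑ j, Qc j := by
    calc (faceIn d P + ((∑ i, Pd i) + ∑ j, Qm j)) + ∑ j, Qc j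
        = (faceIn d P + ∑ i, Pd i) + ((∑ j, Qm j) + ∑ j, Qc j) := by abel
      _ = (faceIn d P + ∑ i, Pd i) + (faceIn (-d) P + ((∑ i, Pm i) + ∑ i, Pc i)) := by
          rw [← e2]
      _ = (faceIn d P + ((∑ i, Pd i) + ∑ i, Pc i)) + (faceIn (-d) P + ∑ i, Pm i) := by abel
      _ = ((∑ j, Qd j) + ∑ j, Qc j) + (faceIn (-d) P + ∑ i, Pm i) := by rw [e1]
      _ = ((∑ j, Qd j) + (faceIn (-d) P + ∑ i, Pm i)) + ∑ j, Qc j := by abel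
  have main : faceIn d P + ((∑ i, Pd i) + ∑ j, Qm j)
      = (∑ j, Qd j) + (faceIn (-d) P + ∑ i, Pm i) :=
    S9d.add_cancel (hgF.add (hgXD.add hgYM)) (hgYD.add (hgG.add hgXM))
      hgQC.1 hgQC.2.1 key
  -- per-element properties
  have hprPd : ∀ i, S9e.Pr d (Pd i) := by
    intro i
    by_cases hpar : S9c.Parallel d (Ps i) <;>
      simp only [hPdDef, hpar, ite_true, ite_false]
    exacts [S9e.pr_zero hn2, S9e.pr_faceIn_d hd (hPs i) hpar]
  have hprQd : ∀ j, S9e.Pr d (Qd j) := by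
    intro j
    by_cases hpar : S9c.Parallel d (Qs j) <;>
      simp only [hQdDef, hpar, ite_true, ite_false]
    exacts [S9e.pr_zero hn2, S9e.pr_faceIn_d hd (hQs j) hpar]
  have hprPm : ∀ i, S9e.Pr d (Pm i) := by
    intro i
    by_cases hpar : S9c.Parallel d (Ps i) <;>
      simp only [hPmDef, hpar, ite_true, ite_false]
    exacts [S9e.pr_zero hn2, S9e.pr_faceIn_neg hd (hPs i) hpar]
  have hprQm : ∀ j, S9e.Pr d (Qm j) := by
    intro j
    by_cases hpar : S9c.Parallel d (Qs j) <;>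
      simp only [hQmDef, hpar, ite_true, ite_false]
    exacts [S9e.pr_zero hn2, S9e.pr_faceIn_neg hd (hQs j) hpar]
  have hprG : S9e.Pr d (faceIn (-d) P) := by
    refine ⟨S9b.isPolytope_faceIn hP, ?_, hface⟩
    have h := S9c.faceIn_subset_translate hdne P
    rw [S9c.span_neg_singleton] at h
    exact ⟨_, h⟩
  set Cn : Fin (r + 1) → Set (EuclideanSpace ℝ (Fin n)) :=
    Fin.cons (faceIn (-d) P) Pm with hCn
  have hprCons : ∀ j : Fin (r + 1), S9e.Pr d (Cn j) := by
    intro j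
    induction j using Fin.cases with
    | zero => rw [hCn, Fin.cons_zero]; exact hprG
    | succ i0 => rw [hCn, Fin.cons_succ]; exact hprPm i0
  -- the witnesses
  refine ⟨r + s, s + (r + 1), Fin.addCases Pd Qm, Fin.addCases Qd Cn, ?_, ?_, ?_⟩
  · exact S9e.forall_addCases (p := S9e.Pr d) Pd Qm hprPd hprQm
  · exact S9e.forall_addCases (p := S9e.Pr d) Qd Cn hprQd hprCons
  have hsum1 : (∑ i : Fin (r + s), Fin.addCases Pd Qm i)
      = (∑ i, Pd i) + ∑ j, Qm j := by
    rw [Fin.sum_univ_add]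
    simp only [Fin.addCases_left, Fin.addCases_right]
  have hsum2 : (∑ j : Fin (s + (r + 1)), Fin.addCases Qd Cn j)
      = (∑ j, Qd j) + (faceIn (-d) P + ∑ i, Pm i) := by
    rw [Fin.sum_univ_add]
    simp only [Fin.addCases_left, Fin.addCases_right]
    rw [Fin.sum_univ_succ]
    simp only [hCn, Fin.cons_zero, Fin.cons_succ]
  rw [hsum1, hsum2]
  exact main
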